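/- Let X be a vector space such that each S^p_k ⊗ X carries norms ‖·‖_{α₀} and ‖·‖_{α₁} making X into L^p-matricially normed spaces (i.e., satisfying ‖cyd‖ ≤ ‖c‖_∞‖y‖‖d‖_∞ for c,d ∈ M_k and ‖y ⊕ y'‖^p = ‖y‖^p + ‖y'‖^p for block diagonal sums). Define ‖y‖_β = inf{(‖y₀‖_{α₀}^p + ‖y₁‖_{α₁}^p)^(1/p) : y = y₀ + y₁}. Then ‖·‖_β also satisfies the L^p block-diagonal identity: ‖y ⊕ y'‖_β^p = ‖y‖_β^p + ‖y'‖_β^p. -/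

import Mathlib

open scoped BigOperators

/-- Left action of a scalar matrix on a matrix with entries in a module `X`. -/
noncomputable def matSMulLeft {X : Type*} [AddCommGroup X] [Module ℂ X] {k : ℕ}
    (c : Matrix (Fin k) (Fin k) ℂ) (y : Matrix (Fin k) (Fin k) X) :
    Matrix (Fin k) (Fin k) X :=
  Matrix.of fun i j => ∑ l, c i l • y l j

/-- Right action of a scalar matrix on a matrix with entries in a module `X`. -/
noncomputable def matSMulRight {X : Type*} [AddCommGroup X] [Module ℂ X] {k : ℕ}
    (y : Matrix (Fin k) (Fin k) X) (d : Matrix (Fin k) (Fin k) ℂ) :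
    Matrix (Fin k) (Fin k) X :=
  Matrix.of fun i j => ∑ l, d l j • y i l

/-- The block diagonal sum `y ⊕ y'` of an `k × k` and an `m × m` matrix over `X`. -/
noncomputable def blockDiagX {X : Type*} [AddCommGroup X] {k m : ℕ}
    (y : Matrix (Fin k) (Fin k) X) (y' : Matrix (Fin m) (Fin m) X) :
    Matrix (Fin (k + m)) (Fin (k + m)) X :=
  Matrix.reindex finSumFinEquiv finSumFinEquiv (Matrix.fromBlocks y 0 0 y')

/-- The operator (spectral) norm of a `k × k` complex matrix. -/
noncomputable def matOpNorm {k : ℕ} (w : Matrix (Fin k) (Fin k) ℂ) : ℝ :=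
  ‖LinearMap.toContinuousLinearMap (Matrix.toEuclideanLin w)‖

/-- `X` together with the family of norms `N k` on the matrix spaces `S^p_k ⊗ X` is an
`L^p`-matricially normed space: the norms satisfy the `M_k`-bimodule contractivity
property (P1) and the `ℓ^p` block-diagonal additivity property (P2). -/
structure IsLpMatNorm {X : Type*} [AddCommGroup X] [Module ℂ X] (p : ℝ)
    (N : ∀ k : ℕ, Matrix (Fin k) (Fin k) X → ℝ) : Prop where
  nonneg : ∀ k y, 0 ≤ N k y
  zero : ∀ k, N k 0 = 0
  add_le : ∀ k (y y' : Matrix (Fin k) (Fin k) X), N k (y + y') ≤ N k y + N k y'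
  bimod : ∀ k (c d : Matrix (Fin k) (Fin k) ℂ) (y : Matrix (Fin k) (Fin k) X),
    N k (matSMulRight (matSMulLeft c y) d) ≤ matOpNorm c * N k y * matOpNorm d
  block : ∀ (k m : ℕ) (y : Matrix (Fin k) (Fin k) X) (y' : Matrix (Fin m) (Fin m) X),
    N (k + m) (blockDiagX y y') ^ p = N k y ^ p + N m y' ^ p

set_option linter.unusedSectionVars false
section Aux
variable {X : Type*} [AddCommGroup X] [Module ℂ X]

noncomputable def cTL {k m : ℕ} (z : Matrix (Fin (k + m)) (Fin (k + m)) X) :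
    Matrix (Fin k) (Fin k) X :=
  Matrix.of fun i j => z (Fin.castAdd m i) (Fin.castAdd m j)

noncomputable def cBR {k m : ℕ} (z : Matrix (Fin (k + m)) (Fin (k + m)) X) :
    Matrix (Fin m) (Fin m) X :=
  Matrix.of fun i j => z (Fin.natAdd k i) (Fin.natAdd k j)

lemma cTL_add {k m : ℕ} (z w : Matrix (Fin (k + m)) (Fin (k + m)) X) :
    cTL (z + w) = cTL z + cTL w := rfl

lemma cBR_add {k m : ℕ} (z w : Matrix (Fin (k + m)) (Fin (k + m)) X) :
    cBR (z + w) = cBR z + cBR w := rfl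

lemma blockDiagX_add {k m : ℕ} (y0 y1 : Matrix (Fin k) (Fin k) X)
    (y0' y1' : Matrix (Fin m) (Fin m) X) :
    blockDiagX (y0 + y1) (y0' + y1') = blockDiagX y0 y0' + blockDiagX y1 y1' := by
  ext i j
  simp only [blockDiagX, Matrix.reindex_apply, Matrix.submatrix_apply, Matrix.add_apply]
  rcases finSumFinEquiv.symm i with a | a <;> rcases finSumFinEquiv.symm j with b | b <;> simp

lemma cTL_blockDiagX {k m : ℕ} (y : Matrix (Fin k) (Fin k) X)
    (y' : Matrix (Fin m) (Fin m) X) : cTL (blockDiagX y y') = y := by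
  ext i j
  simp [cTL, blockDiagX]

lemma cBR_blockDiagX {k m : ℕ} (y : Matrix (Fin k) (Fin k) X)
    (y' : Matrix (Fin m) (Fin m) X) : cBR (blockDiagX y y') = y' := by
  ext i j
  simp [cBR, blockDiagX]

end Aux

section Aux2
variable {X : Type*} [AddCommGroup X] [Module ℂ X]

lemma matSMulLeft_diag {n : ℕ} (ε : Fin n → ℂ) (z : Matrix (Fin n) (Fin n) X) (i j : Fin n) :
    matSMulLeft (Matrix.diagonal ε) z i j = ε i • z i j := by
  simp [matSMulLeft, Matrix.diagonal_apply, ite_smul]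

lemma matSMulRight_diag {n : ℕ} (ε : Fin n → ℂ) (z : Matrix (Fin n) (Fin n) X) (i j : Fin n) :
    matSMulRight z (Matrix.diagonal ε) i j = ε j • z i j := by
  simp [matSMulRight, Matrix.diagonal_apply, ite_smul]

lemma matSMulLeft_one {n : ℕ} (z : Matrix (Fin n) (Fin n) X) :
    matSMulLeft 1 z = z := by
  ext i j
  simp [matSMulLeft, Matrix.one_apply, ite_smul]

lemma matSMulRight_one {n : ℕ} (z : Matrix (Fin n) (Fin n) X) :
    matSMulRight z 1 = z := by
  ext i j
  simp [matSMulRight, Matrix.one_apply, ite_smul]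

lemma matSMulLeft_smul {n : ℕ} (a : ℂ) (c : Matrix (Fin n) (Fin n) ℂ)
    (z : Matrix (Fin n) (Fin n) X) :
    matSMulLeft (a • c) z = a • matSMulLeft c z := by
  ext i j
  simp [matSMulLeft, Matrix.smul_apply, smul_eq_mul, mul_smul, Finset.smul_sum]

lemma matSMulRight_smul {n : ℕ} (a : ℂ) (d : Matrix (Fin n) (Fin n) ℂ)
    (z : Matrix (Fin n) (Fin n) X) :
    matSMulRight z (a • d) = a • matSMulRight z d := by
  ext i j
  simp [matSMulRight, Matrix.smul_apply, smul_eq_mul, mul_smul, Finset.smul_sum]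

lemma matSMulRight_smul_mat {n : ℕ} (a : ℂ) (d : Matrix (Fin n) (Fin n) ℂ)
    (z : Matrix (Fin n) (Fin n) X) :
    matSMulRight (a • z) d = a • matSMulRight z d := by
  ext i j
  simp only [matSMulRight, Matrix.of_apply, Matrix.smul_apply, Finset.smul_sum]
  exact Finset.sum_congr rfl fun l _ => smul_comm _ _ _

end Aux2

lemma matOpNorm_smul (a : ℂ) {n : ℕ} (w : Matrix (Fin n) (Fin n) ℂ) :
    matOpNorm (a • w) = ‖a‖ * matOpNorm w := by
  unfold matOpNorm
  rw [map_smul, map_smul]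
  exact norm_smul a (LinearMap.toContinuousLinearMap (Matrix.toEuclideanLin w))

lemma matOpNorm_diagonal_le {n : ℕ} (ε : Fin n → ℂ) (h : ∀ i, ‖ε i‖ ≤ 1) :
    matOpNorm (Matrix.diagonal ε) ≤ 1 := by
  refine ContinuousLinearMap.opNorm_le_bound _ zero_le_one fun x => ?_
  rw [one_mul]
  have hx : (LinearMap.toContinuousLinearMap (Matrix.toEuclideanLin (Matrix.diagonal ε))) x
      = Matrix.toEuclideanLin (Matrix.diagonal ε) x := rfl
  rw [hx, Matrix.toEuclideanLin_apply, EuclideanSpace.norm_eq, EuclideanSpace.norm_eq]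
  apply Real.sqrt_le_sqrt
  apply Finset.sum_le_sum
  intro i _
  have h1 : (WithLp.toLp 2 ((Matrix.diagonal ε).mulVec x.ofLp)).ofLp i
      = ε i * x i := by
    simp [Matrix.mulVec_diagonal]
  rw [h1, norm_mul]
  have h2 : ‖ε i‖ * ‖x i‖ ≤ 1 * ‖x i‖ :=
    mul_le_mul_of_nonneg_right (h i) (norm_nonneg _)
  rw [one_mul] at h2
  exact pow_le_pow_left₀ (by positivity) h2 2

lemma matOpNorm_one_le {n : ℕ} : matOpNorm (1 : Matrix (Fin n) (Fin n) ℂ) ≤ 1 := by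
  rw [← Matrix.diagonal_one]
  exact matOpNorm_diagonal_le _ fun i => by simp

section Aux3
variable {X : Type*} [AddCommGroup X] [Module ℂ X]

lemma conj_diag {n : ℕ} (ε : Fin n → ℂ) (z : Matrix (Fin n) (Fin n) X) :
    matSMulRight (matSMulLeft (Matrix.diagonal ε) z) (Matrix.diagonal ε)
      = Matrix.of fun i j => (ε i * ε j) • z i j := by
  ext i j
  rw [matSMulRight_diag, matSMulLeft_diag, smul_smul, mul_comm (ε j) (ε i)]
  rfl

lemma compress_decomp {k m : ℕ} (z : Matrix (Fin (k + m)) (Fin (k + m)) X) :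
    blockDiagX (cTL z) (cBR z)
      = matSMulRight (matSMulLeft (((Real.sqrt 2 : ℝ) : ℂ)⁻¹ •
          Matrix.diagonal (fun i : Fin (k + m) => if (i : ℕ) < k then (1 : ℂ) else -1)) z)
          (((Real.sqrt 2 : ℝ) : ℂ)⁻¹ •
          Matrix.diagonal (fun i : Fin (k + m) => if (i : ℕ) < k then (1 : ℂ) else -1))
        + matSMulRight (matSMulLeft (((Real.sqrt 2 : ℝ) : ℂ)⁻¹ •
            (1 : Matrix (Fin (k + m)) (Fin (k + m)) ℂ)) z)
          (((Real.sqrt 2 : ℝ) : ℂ)⁻¹ • (1 : Matrix (Fin (k + m)) (Fin (k + m)) ℂ)) := by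
  set s : ℂ := ((Real.sqrt 2 : ℝ) : ℂ)⁻¹ with hs_def
  set ε : Fin (k + m) → ℂ := fun i => if (i : ℕ) < k then (1 : ℂ) else -1 with hε_def
  have hss : s * s = 2⁻¹ := by
    rw [hs_def, ← mul_inv, ← Complex.ofReal_mul, Real.mul_self_sqrt (by norm_num : (0:ℝ) ≤ 2)]
    norm_num
  rw [matSMulLeft_smul, matSMulRight_smul_mat, matSMulRight_smul,
    matSMulLeft_smul, matSMulRight_smul_mat, matSMulRight_smul,
    conj_diag, matSMulLeft_one, matSMulRight_one]
  ext i j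
  simp only [Matrix.add_apply, Matrix.smul_apply, Matrix.of_apply, smul_smul, hss]
  obtain ⟨i', rfl⟩ := finSumFinEquiv.surjective i
  obtain ⟨j', rfl⟩ := finSumFinEquiv.surjective j
  have hcoe_l : ∀ a : Fin k, ((finSumFinEquiv (Sum.inl a) : Fin (k + m)) : ℕ) < k := by
    intro a; simp [finSumFinEquiv_apply_left]
  have hcoe_r : ∀ a : Fin m, ¬ ((finSumFinEquiv (Sum.inr a) : Fin (k + m)) : ℕ) < k := by
    intro a; simp [finSumFinEquiv_apply_right]
  rcases i' with a | a <;> rcases j' with b | b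
  · have h1 : ε (finSumFinEquiv (Sum.inl a)) = 1 := by simp [hε_def, hcoe_l a]
    have h2 : ε (finSumFinEquiv (Sum.inl b)) = 1 := by simp [hε_def, hcoe_l b]
    have hL : blockDiagX (cTL z) (cBR z) (finSumFinEquiv (Sum.inl a)) (finSumFinEquiv (Sum.inl b))
        = z (finSumFinEquiv (Sum.inl a)) (finSumFinEquiv (Sum.inl b)) := by
      simp [blockDiagX, cTL, finSumFinEquiv_apply_left]
    rw [hL, h1, h2, ← add_smul]
    norm_num
  · have h1 : ε (finSumFinEquiv (Sum.inl a)) = 1 := by simp [hε_def, hcoe_l a]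
    have h2 : ε (finSumFinEquiv (Sum.inr b)) = -1 := by simp [hε_def, hcoe_r b]
    have hL : blockDiagX (cTL z) (cBR z) (finSumFinEquiv (Sum.inl a)) (finSumFinEquiv (Sum.inr b))
        = 0 := by
      simp [blockDiagX]
    rw [hL, h1, h2, ← add_smul]
    norm_num
  · have h1 : ε (finSumFinEquiv (Sum.inr a)) = -1 := by simp [hε_def, hcoe_r a]
    have h2 : ε (finSumFinEquiv (Sum.inl b)) = 1 := by simp [hε_def, hcoe_l b]
    have hL : blockDiagX (cTL z) (cBR z) (finSumFinEquiv (Sum.inr a)) (finSumFinEquiv (Sum.inl b))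
        = 0 := by
      simp [blockDiagX]
    rw [hL, h1, h2, ← add_smul]
    norm_num
  · have h1 : ε (finSumFinEquiv (Sum.inr a)) = -1 := by simp [hε_def, hcoe_r a]
    have h2 : ε (finSumFinEquiv (Sum.inr b)) = -1 := by simp [hε_def, hcoe_r b]
    have hL : blockDiagX (cTL z) (cBR z) (finSumFinEquiv (Sum.inr a)) (finSumFinEquiv (Sum.inr b))
        = z (finSumFinEquiv (Sum.inr a)) (finSumFinEquiv (Sum.inr b)) := by
      simp [blockDiagX, cBR, finSumFinEquiv_apply_right]
    rw [hL, h1, h2, ← add_smul]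
    norm_num

end Aux3

lemma compress_le {X : Type*} [AddCommGroup X] [Module ℂ X] {p : ℝ}
    {N : ∀ k : ℕ, Matrix (Fin k) (Fin k) X → ℝ} (hN : IsLpMatNorm p N)
    {k m : ℕ} (z : Matrix (Fin (k + m)) (Fin (k + m)) X) :
    N (k + m) (blockDiagX (cTL z) (cBR z)) ≤ N (k + m) z := by
  set s : ℂ := ((Real.sqrt 2 : ℝ) : ℂ)⁻¹ with hs_def
  set ε : Fin (k + m) → ℂ := fun i => if (i : ℕ) < k then (1 : ℂ) else -1 with hε_def
  have hsnorm : ‖s‖ = (Real.sqrt 2)⁻¹ := by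
    rw [hs_def, norm_inv, Complex.norm_real, Real.norm_eq_abs,
      abs_of_nonneg (Real.sqrt_nonneg 2)]
  have hεnorm : ∀ i, ‖ε i‖ ≤ 1 := by
    intro i; by_cases h : (i : ℕ) < k <;> simp [hε_def, h]
  have hr : (0:ℝ) < Real.sqrt 2 := Real.sqrt_pos.2 (by norm_num)
  have hb1 : matOpNorm (s • Matrix.diagonal ε) ≤ (Real.sqrt 2)⁻¹ := by
    rw [matOpNorm_smul, hsnorm]
    calc (Real.sqrt 2)⁻¹ * matOpNorm (Matrix.diagonal ε)
        ≤ (Real.sqrt 2)⁻¹ * 1 :=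
          mul_le_mul_of_nonneg_left (matOpNorm_diagonal_le ε hεnorm) (by positivity)
      _ = (Real.sqrt 2)⁻¹ := mul_one _
  have hb2 : matOpNorm (s • (1 : Matrix (Fin (k + m)) (Fin (k + m)) ℂ)) ≤ (Real.sqrt 2)⁻¹ := by
    rw [matOpNorm_smul, hsnorm]
    calc (Real.sqrt 2)⁻¹ * matOpNorm (1 : Matrix (Fin (k + m)) (Fin (k + m)) ℂ)
        ≤ (Real.sqrt 2)⁻¹ * 1 := mul_le_mul_of_nonneg_left matOpNorm_one_le (by positivity)
      _ = (Real.sqrt 2)⁻¹ := mul_one _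
  have hNz : 0 ≤ N (k + m) z := hN.nonneg _ _
  have hop1 : 0 ≤ matOpNorm (s • Matrix.diagonal ε) := norm_nonneg _
  have hop2 : 0 ≤ matOpNorm (s • (1 : Matrix (Fin (k + m)) (Fin (k + m)) ℂ)) := norm_nonneg _
  rw [compress_decomp z]
  calc N (k + m) (matSMulRight (matSMulLeft (s • Matrix.diagonal ε) z) (s • Matrix.diagonal ε)
          + matSMulRight (matSMulLeft (s • 1) z) (s • 1))
      ≤ N (k + m) (matSMulRight (matSMulLeft (s • Matrix.diagonal ε) z) (s • Matrix.diagonal ε))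
        + N (k + m) (matSMulRight (matSMulLeft (s • 1) z) (s • 1)) := hN.add_le _ _ _
    _ ≤ matOpNorm (s • Matrix.diagonal ε) * N (k + m) z * matOpNorm (s • Matrix.diagonal ε)
        + matOpNorm (s • 1) * N (k + m) z * matOpNorm (s • 1) :=
        add_le_add (hN.bimod _ _ _ _) (hN.bimod _ _ _ _)
    _ ≤ (Real.sqrt 2)⁻¹ * N (k + m) z * (Real.sqrt 2)⁻¹
        + (Real.sqrt 2)⁻¹ * N (k + m) z * (Real.sqrt 2)⁻¹ := by
        apply add_le_add
        · exact mul_le_mul (mul_le_mul hb1 le_rfl hNz (by positivity)) hb1 hop1 (by positivity)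
        · exact mul_le_mul (mul_le_mul hb2 le_rfl hNz (by positivity)) hb2 hop2 (by positivity)
    _ = ((Real.sqrt 2)⁻¹ * (Real.sqrt 2)⁻¹ * 2) * N (k + m) z := by ring
    _ = N (k + m) z := by
        rw [← mul_inv, Real.mul_self_sqrt (by norm_num : (0:ℝ) ≤ 2)]
        norm_num

lemma sInf_rpow_eq (S : Set ℝ) (hne : S.Nonempty) (hpos : ∀ r ∈ S, 0 ≤ r) {p : ℝ}
    (hp : 0 < p) : sInf S ^ p = sInf ((fun r => r ^ p) '' S) := by
  have hbdd : BddBelow S := ⟨0, fun r hr => hpos r hr⟩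
  have h0 : 0 ≤ sInf S := le_csInf hne hpos
  have hbdd' : BddBelow ((fun r => r ^ p) '' S) := by
    refine ⟨0, ?_⟩
    rintro t ⟨r, hr, rfl⟩
    exact Real.rpow_nonneg (hpos r hr) p
  apply le_antisymm
  · apply le_csInf (hne.image _)
    rintro t ⟨r, hr, rfl⟩
    exact Real.rpow_le_rpow h0 (csInf_le hbdd hr) hp.le
  · have h1 : 0 ≤ sInf ((fun r => r ^ p) '' S) := by
      apply le_csInf (hne.image _)
      rintro t ⟨r, hr, rfl⟩
      exact Real.rpow_nonneg (hpos r hr) p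
    have h2 : sInf ((fun r => r ^ p) '' S) ^ p⁻¹ ≤ sInf S := by
      apply le_csInf hne
      intro r hr
      calc sInf ((fun r => r ^ p) '' S) ^ p⁻¹
          ≤ (r ^ p) ^ p⁻¹ :=
            Real.rpow_le_rpow h1 (csInf_le hbdd' ⟨r, hr, rfl⟩) (by positivity)
        _ = r := Real.rpow_rpow_inv (hpos r hr) hp.ne'
    calc sInf ((fun r => r ^ p) '' S)
        = (sInf ((fun r => r ^ p) '' S) ^ p⁻¹) ^ p := (Real.rpow_inv_rpow h1 hp.ne').symm
      _ ≤ sInf S ^ p := Real.rpow_le_rpow (Real.rpow_nonneg h1 _) h2 hp.le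

/-- The sum `β` of two `L^p`-matricial norm structures,
`‖y‖_β = inf {(‖y₀‖_{α₀}^p + ‖y₁‖_{α₁}^p)^(1/p) : y = y₀ + y₁}`,
again satisfies the `L^p` block-diagonal identity (P2). -/
theorem sum_norm_block_diagonal {X : Type*} [AddCommGroup X] [Module ℂ X]
    (p : ℝ) (hp : 1 ≤ p)
    (N0 N1 : ∀ k : ℕ, Matrix (Fin k) (Fin k) X → ℝ)
    (h0 : IsLpMatNorm p N0) (h1 : IsLpMatNorm p N1)
    (Nβ : ∀ k : ℕ, Matrix (Fin k) (Fin k) X → ℝ)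
    (hβ : ∀ k (y : Matrix (Fin k) (Fin k) X),
      Nβ k y = sInf {r : ℝ | ∃ y0 y1 : Matrix (Fin k) (Fin k) X,
        y = y0 + y1 ∧ r = (N0 k y0 ^ p + N1 k y1 ^ p) ^ (1 / p)}) :
    ∀ (k m : ℕ) (y : Matrix (Fin k) (Fin k) X) (y' : Matrix (Fin m) (Fin m) X),
      Nβ (k + m) (blockDiagX y y') ^ p = Nβ k y ^ p + Nβ m y' ^ p := by
  intro k m y y'
  have hp0 : (0:ℝ) < p := lt_of_lt_of_le one_pos hp
  have key : ∀ (n : ℕ) (w : Matrix (Fin n) (Fin n) X),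
      Nβ n w ^ p = sInf {t : ℝ | ∃ w0 w1 : Matrix (Fin n) (Fin n) X,
        w = w0 + w1 ∧ t = N0 n w0 ^ p + N1 n w1 ^ p} := by
    intro n w
    rw [hβ]
    have hne : ({r : ℝ | ∃ y0 y1 : Matrix (Fin n) (Fin n) X,
        w = y0 + y1 ∧ r = (N0 n y0 ^ p + N1 n y1 ^ p) ^ (1 / p)}).Nonempty :=
      ⟨_, w, 0, (add_zero w).symm, rfl⟩
    have hpos : ∀ r ∈ {r : ℝ | ∃ y0 y1 : Matrix (Fin n) (Fin n) X,
        w = y0 + y1 ∧ r = (N0 n y0 ^ p + N1 n y1 ^ p) ^ (1 / p)}, 0 ≤ r := by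
      rintro r ⟨y0, y1, -, rfl⟩
      exact Real.rpow_nonneg (add_nonneg (Real.rpow_nonneg (h0.nonneg _ _) _)
        (Real.rpow_nonneg (h1.nonneg _ _) _)) _
    rw [sInf_rpow_eq _ hne hpos hp0]
    congr 1
    ext t
    constructor
    · rintro ⟨r, ⟨y0, y1, hw, rfl⟩, rfl⟩
      refine ⟨y0, y1, hw, ?_⟩
      rw [one_div]
      exact Real.rpow_inv_rpow (add_nonneg (Real.rpow_nonneg (h0.nonneg _ _) _)
        (Real.rpow_nonneg (h1.nonneg _ _) _)) hp0.ne'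
    · rintro ⟨y0, y1, hw, rfl⟩
      refine ⟨(N0 n y0 ^ p + N1 n y1 ^ p) ^ (1 / p), ⟨y0, y1, hw, rfl⟩, ?_⟩
      rw [one_div]
      exact Real.rpow_inv_rpow (add_nonneg (Real.rpow_nonneg (h0.nonneg _ _) _)
        (Real.rpow_nonneg (h1.nonneg _ _) _)) hp0.ne'
  have hne : ∀ (n : ℕ) (w : Matrix (Fin n) (Fin n) X),
      ({t : ℝ | ∃ w0 w1 : Matrix (Fin n) (Fin n) X,
        w = w0 + w1 ∧ t = N0 n w0 ^ p + N1 n w1 ^ p}).Nonempty :=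
    fun n w => ⟨_, w, 0, (add_zero w).symm, rfl⟩
  have hbdd : ∀ (n : ℕ) (w : Matrix (Fin n) (Fin n) X),
      BddBelow {t : ℝ | ∃ w0 w1 : Matrix (Fin n) (Fin n) X,
        w = w0 + w1 ∧ t = N0 n w0 ^ p + N1 n w1 ^ p} := by
    intro n w
    refine ⟨0, ?_⟩
    rintro t ⟨w0, w1, -, rfl⟩
    exact add_nonneg (Real.rpow_nonneg (h0.nonneg _ _) _)
      (Real.rpow_nonneg (h1.nonneg _ _) _)
  rw [key, key, key]
  have hstep : ∀ t ∈ {t : ℝ | ∃ w0 w1 : Matrix (Fin k) (Fin k) X,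
        y = w0 + w1 ∧ t = N0 k w0 ^ p + N1 k w1 ^ p},
      ∀ t' ∈ {t : ℝ | ∃ w0 w1 : Matrix (Fin m) (Fin m) X,
        y' = w0 + w1 ∧ t = N0 m w0 ^ p + N1 m w1 ^ p},
      sInf {t : ℝ | ∃ w0 w1 : Matrix (Fin (k + m)) (Fin (k + m)) X,
        blockDiagX y y' = w0 + w1 ∧ t = N0 (k + m) w0 ^ p + N1 (k + m) w1 ^ p} ≤ t + t' := by
    rintro t ⟨y0, y1, hy, rfl⟩ t' ⟨y0', y1', hy', rfl⟩
    apply csInf_le (hbdd _ _)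
    refine ⟨blockDiagX y0 y0', blockDiagX y1 y1', by rw [hy, hy', blockDiagX_add], ?_⟩
    rw [h0.block, h1.block]
    ring
  have h_le : sInf {t : ℝ | ∃ w0 w1 : Matrix (Fin (k + m)) (Fin (k + m)) X,
        blockDiagX y y' = w0 + w1 ∧ t = N0 (k + m) w0 ^ p + N1 (k + m) w1 ^ p} ≤
      sInf {t : ℝ | ∃ w0 w1 : Matrix (Fin k) (Fin k) X,
        y = w0 + w1 ∧ t = N0 k w0 ^ p + N1 k w1 ^ p} +
      sInf {t : ℝ | ∃ w0 w1 : Matrix (Fin m) (Fin m) X,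
        y' = w0 + w1 ∧ t = N0 m w0 ^ p + N1 m w1 ^ p} := by
    have h2 : ∀ t ∈ {t : ℝ | ∃ w0 w1 : Matrix (Fin k) (Fin k) X,
        y = w0 + w1 ∧ t = N0 k w0 ^ p + N1 k w1 ^ p},
        sInf {t : ℝ | ∃ w0 w1 : Matrix (Fin (k + m)) (Fin (k + m)) X,
          blockDiagX y y' = w0 + w1 ∧ t = N0 (k + m) w0 ^ p + N1 (k + m) w1 ^ p} - t ≤
        sInf {t : ℝ | ∃ w0 w1 : Matrix (Fin m) (Fin m) X,
          y' = w0 + w1 ∧ t = N0 m w0 ^ p + N1 m w1 ^ p} := by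
      intro t ht
      apply le_csInf (hne m y')
      intro t' ht'
      linarith [hstep t ht t' ht']
    have h3 : sInf {t : ℝ | ∃ w0 w1 : Matrix (Fin (k + m)) (Fin (k + m)) X,
          blockDiagX y y' = w0 + w1 ∧ t = N0 (k + m) w0 ^ p + N1 (k + m) w1 ^ p} -
        sInf {t : ℝ | ∃ w0 w1 : Matrix (Fin m) (Fin m) X,
          y' = w0 + w1 ∧ t = N0 m w0 ^ p + N1 m w1 ^ p} ≤
        sInf {t : ℝ | ∃ w0 w1 : Matrix (Fin k) (Fin k) X,
          y = w0 + w1 ∧ t = N0 k w0 ^ p + N1 k w1 ^ p} := by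
      apply le_csInf (hne k y)
      intro t ht
      linarith [h2 t ht]
    linarith
  have h_ge : sInf {t : ℝ | ∃ w0 w1 : Matrix (Fin k) (Fin k) X,
        y = w0 + w1 ∧ t = N0 k w0 ^ p + N1 k w1 ^ p} +
      sInf {t : ℝ | ∃ w0 w1 : Matrix (Fin m) (Fin m) X,
        y' = w0 + w1 ∧ t = N0 m w0 ^ p + N1 m w1 ^ p} ≤
      sInf {t : ℝ | ∃ w0 w1 : Matrix (Fin (k + m)) (Fin (k + m)) X,
        blockDiagX y y' = w0 + w1 ∧ t = N0 (k + m) w0 ^ p + N1 (k + m) w1 ^ p} := by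
    apply le_csInf (hne _ _)
    rintro t ⟨z0, z1, hz, rfl⟩
    have hy : y = cTL z0 + cTL z1 := by
      have h := congrArg cTL hz
      rwa [cTL_blockDiagX, cTL_add] at h
    have hy' : y' = cBR z0 + cBR z1 := by
      have h := congrArg cBR hz
      rwa [cBR_blockDiagX, cBR_add] at h
    have a1 : sInf {t : ℝ | ∃ w0 w1 : Matrix (Fin k) (Fin k) X,
          y = w0 + w1 ∧ t = N0 k w0 ^ p + N1 k w1 ^ p} ≤
        N0 k (cTL z0) ^ p + N1 k (cTL z1) ^ p :=
      csInf_le (hbdd _ _) ⟨cTL z0, cTL z1, hy, rfl⟩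
    have a2 : sInf {t : ℝ | ∃ w0 w1 : Matrix (Fin m) (Fin m) X,
          y' = w0 + w1 ∧ t = N0 m w0 ^ p + N1 m w1 ^ p} ≤
        N0 m (cBR z0) ^ p + N1 m (cBR z1) ^ p :=
      csInf_le (hbdd _ _) ⟨cBR z0, cBR z1, hy', rfl⟩
    have c0 : N0 (k + m) (blockDiagX (cTL z0) (cBR z0)) ^ p
        = N0 k (cTL z0) ^ p + N0 m (cBR z0) ^ p := h0.block k m _ _
    have c1 : N1 (k + m) (blockDiagX (cTL z1) (cBR z1)) ^ p
        = N1 k (cTL z1) ^ p + N1 m (cBR z1) ^ p := h1.block k m _ _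
    have b0 : N0 (k + m) (blockDiagX (cTL z0) (cBR z0)) ^ p ≤ N0 (k + m) z0 ^ p :=
      Real.rpow_le_rpow (h0.nonneg _ _) (compress_le h0 z0) hp0.le
    have b1 : N1 (k + m) (blockDiagX (cTL z1) (cBR z1)) ^ p ≤ N1 (k + m) z1 ^ p :=
      Real.rpow_le_rpow (h1.nonneg _ _) (compress_le h1 z1) hp0.le
    linarith
  exact le_antisymm h_le h_ge
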